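/- A divisor method with function f satisfies weak weighted envy-freeness up to one item (WWEF1) — i.e., it produces a WWEF1 allocation for every instance (every number of agents and items, weights, and additive utilities) — if and only if both of the following conditions hold: (1) f(a)/f(b) ≤ a/b for all integers 1 ≤ b ≤ a; (2) f(a)/f(b) ≤ (a+1)/(b+1) for all integers 0 ≤ a ≤ b with b ≠ 0. -/

import Mathlib

open Finset

/-- The favorite item of an agent with item-utility function `u` among a remaining
set `R` of items: a highest-valued item, ties broken in favor of the lower-numbered item. -/
noncomputable def favorite {m : ℕ} (u : Fin m → ℝ) (R : Finset (Fin m)) : Option (Fin m) :=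
  if h : (R.filter fun j => ∀ j' ∈ R, u j' ≤ u j).Nonempty then
    some ((R.filter fun j => ∀ j' ∈ R, u j' ≤ u j).min' h)
  else none

/-- One step of the picking process: agent `a` picks her favorite remaining item. -/
noncomputable def pickStep {n m : ℕ} (u : Fin n → Fin m → ℝ)
    (st : Finset (Fin m) × (Fin n → Finset (Fin m))) (a : Fin n) :
    Finset (Fin m) × (Fin n → Finset (Fin m)) :=
  match favorite (u a) st.1 with
  | none => st
  | some j => (st.1.erase j, Function.update st.2 a (insert j (st.2 a)))

/-- The allocation produced by letting agents pick their favorite remaining items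
in the order given by the picking sequence `π`. -/
noncomputable def allocate {n m : ℕ} (u : Fin n → Fin m → ℝ) (π : List (Fin n)) :
    Fin n → Finset (Fin m) :=
  (π.foldl (pickStep u) (Finset.univ, fun _ => ∅)).2

/-- Weak weighted envy-freeness up to one item. -/
def isWWEF1 {n m : ℕ} (w : Fin n → ℝ) (u : Fin n → Fin m → ℝ)
    (M : Fin n → Finset (Fin m)) : Prop :=
  ∀ i j : Fin n, ∃ B ⊆ M j, B.card ≤ 1 ∧
    ((∑ x ∈ M j \ B, u i x) / w j ≤ (∑ x ∈ M i, u i x) / w i ∨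
     (∑ x ∈ M j, u i x) / w j ≤ (∑ x ∈ M i ∪ B, u i x) / w i)

/-- A divisor method is given by a strictly increasing `f : ℕ → ℝ` with `t ≤ f t ≤ t + 1`. -/
def IsDivisorFn (f : ℕ → ℝ) : Prop :=
  StrictMono f ∧ ∀ t : ℕ, (t : ℝ) ≤ f t ∧ f t ≤ t + 1

/-- `π` is the picking sequence induced by the divisor method with function `f` and
weights `w`: each pick goes to an agent minimizing `f t_i / w_i` (where `t_i` is the
number of picks agent `i` has received so far), ties broken toward lower-numbered agents. -/
def IsDivisorSeq {n : ℕ} (f : ℕ → ℝ) (w : Fin n → ℝ) (π : List (Fin n)) : Prop :=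
  ∀ (k : ℕ) (hk : k < π.length) (i : Fin n),
    f ((π.take k).count (π.get ⟨k, hk⟩)) / w (π.get ⟨k, hk⟩) ≤
      f ((π.take k).count i) / w i ∧
    (i < π.get ⟨k, hk⟩ →
      f ((π.take k).count (π.get ⟨k, hk⟩)) / w (π.get ⟨k, hk⟩) <
        f ((π.take k).count i) / w i)


-- ### Auxiliary development ###


lemma charge_aux (wi wj : ℝ) (hwi : 0 < wi) (hwj : 0 < wj)
    (z : ℕ → ℝ) (hz : ∀ t, 0 ≤ z t) (hza : ∀ t t', t ≤ t' → z t' ≤ z t)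
    (y : ℕ → ℝ) (c : ℕ → ℕ) (b : ℕ) (hb : 1 ≤ b)
    (hy : ∀ s, s < b → y s ≤ z (c s))
    (hc : ∀ s s', s ≤ s' → s' < b → c s ≤ c s')
    (hall : ∀ s, s < b → wi * ((s : ℝ) + 1) ≤ wj * ((c s : ℝ) + 1)) :
    wi * (∑ s ∈ range b, y s) + (wj * ((c (b-1) : ℝ) + 1) - wi * b) * z (c (b-1))
      ≤ wj * ∑ t ∈ range (c (b-1) + 1), z t := by
  induction b, hb using Nat.le_induction with
  | base =>
    simp only [Nat.sub_self, sum_range_one, Nat.cast_one]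
    have h1 : y 0 ≤ z (c 0) := hy 0 one_pos
    have h2 : ((c 0 : ℝ) + 1) * z (c 0) ≤ ∑ t ∈ range (c 0 + 1), z t := by
      have := Finset.card_nsmul_le_sum (range (c 0 + 1)) z (z (c 0))
        (fun t ht => hza t (c 0) (by simpa using Nat.lt_succ_iff.mp (mem_range.mp ht)))
      simpa [nsmul_eq_mul, Nat.cast_add] using this
    nlinarith [hz (c 0), mul_le_mul_of_nonneg_left h1 hwi.le]
  | succ b hb ih =>
    have hbb : (b + 1) - 1 = b := by omega
    have hb1 : b - 1 < b := by omega
    set C := c (b - 1) with hC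
    set C' := c b with hC'
    have hCC' : C ≤ C' := hc (b-1) b (by omega) (by omega)
    have ih' := ih (fun s hs => hy s (by omega)) (fun s s' h h' => hc s s' h (by omega))
      (fun s hs => hall s (by omega))
    rw [hbb]
    rw [sum_range_succ]
    -- split the z-sum
    have hsplit : ∑ t ∈ range (C' + 1), z t
        = ∑ t ∈ range (C + 1), z t + ∑ t ∈ Ico (C+1) (C'+1), z t := by
      simp only [range_eq_Ico]
      exact (Finset.sum_Ico_consecutive z (by omega) (by omega)).symm
    have h2 : ((C' : ℝ) - C) * z C' ≤ ∑ t ∈ Ico (C+1) (C'+1), z t := by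
      have := Finset.card_nsmul_le_sum (Ico (C+1) (C'+1)) z (z C')
        (fun t ht => hza t C' (by have := (mem_Ico.mp ht).2; omega))
      rw [Nat.card_Ico, nsmul_eq_mul] at this
      calc ((C' : ℝ) - C) * z C' = ((C' + 1 - (C+1) : ℕ) : ℝ) * z C' := by
              rw [Nat.cast_sub (by omega : C + 1 ≤ C' + 1)]; push_cast; ring
        _ ≤ _ := this
    have hyb : y b ≤ z C' := hy b (by omega)
    have hzz : z C' ≤ z C := hza C C' hCC'
    have hcoef : 0 ≤ wj * ((C:ℝ) + 1) - wi * b := by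
      have := hall (b-1) (by omega)
      rw [Nat.cast_sub (by omega : 1 ≤ b)] at this
      push_cast at this
      linarith
    have key : wi * y b + (wj * ((C' : ℝ) + 1) - wi * (b+1)) * z C'
        ≤ wj * ∑ t ∈ Ico (C+1) (C'+1), z t + (wj * ((C:ℝ) + 1) - wi * b) * z C := by
      have e1 : wi * y b ≤ wi * z C' := mul_le_mul_of_nonneg_left hyb hwi.le
      have e2 : (wj * ((C:ℝ) + 1) - wi * b) * z C' ≤ (wj * ((C:ℝ) + 1) - wi * b) * z C :=
        mul_le_mul_of_nonneg_left hzz hcoef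
      have e3 : wj * (((C' : ℝ) - C) * z C') ≤ wj * ∑ t ∈ Ico (C+1) (C'+1), z t :=
        mul_le_mul_of_nonneg_left h2 hwj.le
      have hCle : ((C:ℝ)) ≤ (C' : ℝ) := by exact_mod_cast hCC'
      nlinarith [hz C', hz C]
    push_cast
    push_cast at ih' key
    rw [hsplit]
    linarith

lemma charge (wi wj : ℝ) (hwi : 0 < wi) (hwj : 0 < wj)
    (z : ℕ → ℝ) (hz : ∀ t, 0 ≤ z t) (hza : ∀ t t', t ≤ t' → z t' ≤ z t)
    (y : ℕ → ℝ) (c : ℕ → ℕ) (b : ℕ)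
    (hy : ∀ s, s < b → y s ≤ z (c s))
    (hc : ∀ s s', s ≤ s' → s' < b → c s ≤ c s')
    (hall : ∀ s, s < b → wi * ((s : ℝ) + 1) ≤ wj * ((c s : ℝ) + 1))
    (N : ℕ) (hN : ∀ s, s < b → c s < N) :
    wi * (∑ s ∈ range b, y s) ≤ wj * ∑ t ∈ range N, z t := by
  rcases Nat.eq_zero_or_pos b with hb | hb
  · subst hb
    simp only [range_zero, sum_empty, mul_zero]
    exact mul_nonneg hwj.le (sum_nonneg fun t _ => hz t)
  · have h := charge_aux wi wj hwi hwj z hz hza y c b hb hy hc hall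
    have hcoef : 0 ≤ wj * ((c (b-1) : ℝ) + 1) - wi * b := by
      have := hall (b-1) (by omega)
      rw [Nat.cast_sub (by omega : 1 ≤ b)] at this
      push_cast at this
      linarith
    have h2 : wj * ∑ t ∈ range (c (b-1) + 1), z t ≤ wj * ∑ t ∈ range N, z t := by
      apply mul_le_mul_of_nonneg_left _ hwj.le
      apply sum_le_sum_of_subset_of_nonneg
      · exact range_subset_range.mpr (by have := hN (b-1) (by omega); omega)
      · exact fun t _ _ => hz t
    nlinarith [hz (c (b-1)), mul_nonneg hcoef (hz (c (b-1)))]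

section Hall
variable {f : ℕ → ℝ} (hmono : StrictMono f) (hbnd : ∀ t : ℕ, (t : ℝ) ≤ f t ∧ f t ≤ t + 1)
  (h1 : ∀ a b : ℕ, 1 ≤ b → b ≤ a → f a / f b ≤ (a : ℝ) / b)
  (h2 : ∀ a b : ℕ, a ≤ b → b ≠ 0 → f a / f b ≤ ((a : ℝ) + 1) / ((b : ℝ) + 1))

include hbnd in
lemma fpos {t : ℕ} (ht : 1 ≤ t) : 0 < f t := by
  have := (hbnd t).1
  have : (1 : ℝ) ≤ (t : ℝ) := by exact_mod_cast ht
  linarith [(hbnd t).1]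

-- from cond (1): b*f a ≤ a*f b  (1 ≤ b ≤ a)
include hbnd h1 in
lemma cond1' {a b : ℕ} (hb : 1 ≤ b) (hba : b ≤ a) : f a * b ≤ (a : ℝ) * f b := by
  have hfb : 0 < f b := fpos hbnd hb
  have hbpos : (0:ℝ) < (b:ℝ) := by exact_mod_cast hb
  have := h1 a b hb hba
  rw [div_le_div_iff₀ hfb hbpos] at this
  linarith

-- from cond (2): (b+1) * f a ≤ (a+1) * f b  (a ≤ b, 1 ≤ b)
include hbnd h2 in
lemma cond2' {a b : ℕ} (hab : a ≤ b) (hb : b ≠ 0) : f a * ((b:ℝ)+1) ≤ ((a : ℝ)+1) * f b := by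
  have hfb : 0 < f b := fpos hbnd (by omega)
  have hbpos : (0:ℝ) < (b:ℝ)+1 := by positivity
  have := h2 a b hab hb
  rw [div_le_div_iff₀ hfb hbpos] at this
  linarith

include hmono hbnd h1 h2 in
lemma hall_le {wi wj : ℝ} (hwi : 0 < wi) (hwj : 0 < wj) (hw : wi ≤ wj)
    (s c : ℕ) (h : wi * f s ≤ wj * f c) :
    wi * ((s : ℝ) + 1) ≤ wj * ((c : ℝ) + 1) := by
  rcases Nat.eq_zero_or_pos s with hs | hs
  · subst hs
    have hc0 : (0:ℝ) ≤ (c:ℝ) := by positivity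
    push_cast
    nlinarith [mul_nonneg hwj.le hc0]
  · have hfs : 0 < f s := fpos hbnd hs
    rcases le_or_gt s c with hsc | hcs
    · -- c ≥ s ≥ 1 : cond1 gives wi*s ≤ wj*c
      have hk := cond1' hbnd h1 hs hsc
      have step : wi * (s:ℝ) ≤ wj * (c:ℝ) := by
        have e1 : wi * f s * (s:ℝ) ≤ wj * f c * (s:ℝ) :=
          mul_le_mul_of_nonneg_right h (by positivity)
        have e2 : wj * (f c * (s:ℝ)) ≤ wj * ((c:ℝ) * f s) :=
          mul_le_mul_of_nonneg_left hk hwj.le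
        have e3 : wi * (s:ℝ) * f s ≤ wj * (c:ℝ) * f s := by nlinarith
        exact le_of_mul_le_mul_right e3 hfs
      nlinarith
    · -- c < s : cond2 gives wi*(s+1) ≤ wj*(c+1)
      have hk := cond2' hbnd h2 hcs.le (by omega)
      have e1 : wi * f s * ((s:ℝ)+1) ≤ wj * f c * ((s:ℝ)+1) :=
        mul_le_mul_of_nonneg_right h (by positivity)
      have e2 : wj * (f c * ((s:ℝ)+1)) ≤ wj * (((c:ℝ)+1) * f s) :=
        mul_le_mul_of_nonneg_left hk hwj.le
      have e3 : wi * ((s:ℝ)+1) * f s ≤ wj * ((c:ℝ)+1) * f s := by nlinarith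
      exact le_of_mul_le_mul_right e3 hfs

include hmono hbnd h1 h2 in
lemma hall_ge {wi wj : ℝ} (hwi : 0 < wi) (hwj : 0 < wj) (hw : wj ≤ wi)
    (s c : ℕ) (hs : 1 ≤ s) (h : wi * f s ≤ wj * f c) :
    1 ≤ c ∧ wi * (s : ℝ) ≤ wj * (c : ℝ) := by
  have hfs : 0 < f s := fpos hbnd hs
  have hc1 : 1 ≤ c := by
    by_contra hc
    have hc0 : c = 0 := by omega
    subst hc0
    have hk := cond2' hbnd h2 (Nat.zero_le s) (by omega)
    -- f 0 * (s+1) ≤ f s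
    have hf0 : 0 ≤ f 0 := by
      have := (hbnd 0).1; simpa using this
    -- wi * f s ≤ wj * f 0 ; wi * f 0 * (s+1) ≤ wi * f s  ≤ wj * f 0
    have e1 : wi * (f 0 * ((s:ℝ)+1)) ≤ wi * f s := by
      apply mul_le_mul_of_nonneg_left _ hwi.le
      simpa using hk
    have hs1 : (1:ℝ) ≤ (s:ℝ) := by exact_mod_cast hs
    rcases eq_or_lt_of_le hf0 with hf00 | hf0p
    · nlinarith
    · have e5 : wi * ((s:ℝ)+1) * f 0 ≤ wj * f 0 := by nlinarith
      have e6 : wi * ((s:ℝ)+1) ≤ wj := le_of_mul_le_mul_right e5 hf0p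
      have e7 : wi * 1 ≤ wi * (s:ℝ) := mul_le_mul_of_nonneg_left hs1 hwi.le
      linarith
  refine ⟨hc1, ?_⟩
  rcases le_or_gt s c with hsc | hcs
  · have hk := cond1' hbnd h1 hs hsc
    have e1 : wi * f s * (s:ℝ) ≤ wj * f c * (s:ℝ) :=
      mul_le_mul_of_nonneg_right h (by positivity)
    have e2 : wj * (f c * (s:ℝ)) ≤ wj * ((c:ℝ) * f s) :=
      mul_le_mul_of_nonneg_left hk hwj.le
    have e3 : wi * (s:ℝ) * f s ≤ wj * (c:ℝ) * f s := by nlinarith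
    exact le_of_mul_le_mul_right e3 hfs
  · have hk := cond2' hbnd h2 hcs.le (by omega)
    have e1 : wi * f s * ((s:ℝ)+1) ≤ wj * f c * ((s:ℝ)+1) :=
      mul_le_mul_of_nonneg_right h (by positivity)
    have e2 : wj * (f c * ((s:ℝ)+1)) ≤ wj * (((c:ℝ)+1) * f s) :=
      mul_le_mul_of_nonneg_left hk hwj.le
    have e3 : wi * ((s:ℝ)+1) * f s ≤ wj * ((c:ℝ)+1) * f s := by nlinarith
    have e4 : wi * ((s:ℝ)+1) ≤ wj * ((c:ℝ)+1) := le_of_mul_le_mul_right e3 hfs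
    linarith

end Hall

lemma favorite_spec {m : ℕ} (u' : Fin m → ℝ) {R : Finset (Fin m)} (h : R.Nonempty) :
    ∃ g, favorite u' R = some g ∧ g ∈ R ∧ ∀ r ∈ R, u' r ≤ u' g := by
  obtain ⟨g0, hg0, hmax⟩ := Finset.exists_max_image R u' h
  have hne : (R.filter fun j => ∀ j' ∈ R, u' j' ≤ u' j).Nonempty :=
    ⟨g0, mem_filter.2 ⟨hg0, hmax⟩⟩
  have hmem := Finset.min'_mem _ hne
  rw [mem_filter] at hmem
  exact ⟨_, by rw [favorite, dif_pos hne], hmem.1, hmem.2⟩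

namespace Sim
variable {n m : ℕ} (u : Fin n → Fin m → ℝ) (π : List (Fin n))

/-- state after `k` picks -/
noncomputable def stt (k : ℕ) : Finset (Fin m) × (Fin n → Finset (Fin m)) :=
  (π.take k).foldl (pickStep u) (Finset.univ, fun _ => ∅)

variable (hπ : π.length = m)

/-- the picker at step `t` -/
def P (t : Fin m) : Fin n := π.get (Fin.cast hπ.symm t)

lemma stt_zero : stt u π 0 = (Finset.univ, fun _ => ∅) := rfl

include hπ in
lemma allocate_eq : allocate u π = (stt u π m).2 := by
  rw [allocate, stt, List.take_of_length_le (le_of_eq hπ)]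

lemma stt_succ_raw {k : ℕ} (hk : k < m) :
    stt u π (k+1) = pickStep u (stt u π k) (P π hπ ⟨k, hk⟩) := by
  have hk' : k < π.length := by omega
  rw [stt, List.take_succ, List.getElem?_eq_getElem hk']
  simp only [Option.toList_some, List.foldl_append, List.foldl_cons, List.foldl_nil]
  rfl

include hπ in
lemma card_R : ∀ k, k ≤ m → ((stt u π k).1).card = m - k := by
  intro k
  induction k with
  | zero => intro _; simp [stt_zero]
  | succ k ih =>
    intro hk1
    have hk : k < m := by omega
    have hcard := ih (by omega)
    have hne : ((stt u π k).1).Nonempty := by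
      rw [← Finset.card_pos, hcard]; omega
    obtain ⟨g, hfav, hgmem, -⟩ := favorite_spec (u (P π hπ ⟨k, hk⟩)) hne
    rw [stt_succ_raw u π hπ hk, pickStep, hfav]
    simp only
    rw [Finset.card_erase_of_mem hgmem, hcard]
    omega

include hπ in
lemma R_nonempty {k : ℕ} (hk : k < m) : ((stt u π k).1).Nonempty := by
  rw [← Finset.card_pos, card_R u π hπ k (by omega)]; omega

/-- the item picked at step `t` -/
noncomputable def pg (t : Fin m) : Fin m :=
  if h : (((stt u π t.1).1).filter fun j' =>
      ∀ r ∈ (stt u π t.1).1, u (P π hπ t) r ≤ u (P π hπ t) j').Nonempty then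
    (((stt u π t.1).1).filter fun j' =>
      ∀ r ∈ (stt u π t.1).1, u (P π hπ t) r ≤ u (P π hπ t) j').min' h
  else t

lemma favorite_eq_pg (t : Fin m) :
    favorite (u (P π hπ t)) ((stt u π t.1).1) = some (pg u π hπ t) := by
  obtain ⟨g, hfav, -, -⟩ := favorite_spec (u (P π hπ t)) (R_nonempty u π hπ t.2)
  rw [hfav]
  rw [favorite] at hfav
  by_cases h : (((stt u π t.1).1).filter fun j' =>
      ∀ r ∈ (stt u π t.1).1, u (P π hπ t) r ≤ u (P π hπ t) j').Nonempty
  · rw [dif_pos h] at hfav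
    rw [pg, dif_pos h]
    exact congrArg some (Option.some_injective _ hfav).symm
  · rw [dif_neg h] at hfav; exact absurd hfav (by simp)

lemma pg_spec (t : Fin m) :
    pg u π hπ t ∈ (stt u π t.1).1 ∧
      ∀ r ∈ (stt u π t.1).1, u (P π hπ t) r ≤ u (P π hπ t) (pg u π hπ t) := by
  obtain ⟨g, hfav, hmem, hmax⟩ := favorite_spec (u (P π hπ t)) (R_nonempty u π hπ t.2)
  have := favorite_eq_pg u π hπ t
  rw [hfav] at this
  obtain rfl := (Option.some_injective _ this).symm
  exact ⟨hmem, hmax⟩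

lemma stt_succ (t : Fin m) :
    stt u π (t.1+1) = (((stt u π t.1).1).erase (pg u π hπ t),
      Function.update ((stt u π t.1).2) (P π hπ t)
        (insert (pg u π hπ t) ((stt u π t.1).2 (P π hπ t)))) := by
  rw [stt_succ_raw u π hπ t.2, pickStep, favorite_eq_pg u π hπ t]

include hπ in
lemma R_antitone : ∀ k k', k ≤ k' → k' ≤ m → (stt u π k').1 ⊆ (stt u π k).1 := by
  intro k k' hkk'
  induction k' with
  | zero => intro _; have : k = 0 := by omega
            subst this; exact fun _ h => h
  | succ k' ih =>
    intro hk'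
    rcases Nat.eq_or_lt_of_le hkk' with h | h
    · subst h; exact fun _ h => h
    · have h1 : (stt u π (k'+1)).1 ⊆ (stt u π k').1 := by
        rw [stt_succ u π hπ ⟨k', by omega⟩]
        exact Finset.erase_subset _ _
      exact h1.trans (ih (by omega) (by omega))

lemma pg_not_mem_succ (t : Fin m) : pg u π hπ t ∉ (stt u π (t.1+1)).1 := by
  rw [stt_succ u π hπ t]
  exact Finset.notMem_erase _ _

lemma pg_lt_val {t t' : Fin m} (h : t < t') :
    u (P π hπ t) (pg u π hπ t') ≤ u (P π hπ t) (pg u π hπ t) := by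
  have hmem : pg u π hπ t' ∈ (stt u π t.1).1 :=
    R_antitone u π hπ t.1 t'.1 (by exact_mod_cast h.le) t'.2.le ((pg_spec u π hπ t').1)
  exact (pg_spec u π hπ t).2 _ hmem

lemma pg_lt_ne {t t' : Fin m} (h : t < t') : pg u π hπ t ≠ pg u π hπ t' := by
  intro heq
  apply pg_not_mem_succ u π hπ t
  rw [heq]
  exact R_antitone u π hπ (t.1+1) t'.1 (by exact_mod_cast h) t'.2.le ((pg_spec u π hπ t').1)

lemma pg_injective : Function.Injective (pg u π hπ) := by
  intro t t' h
  by_contra hne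
  rcases lt_or_gt_of_ne hne with hlt | hlt
  · exact pg_lt_ne u π hπ hlt h
  · exact pg_lt_ne u π hπ hlt h.symm

lemma M_eq_image : ∀ k, k ≤ m → ∀ i,
    (stt u π k).2 i = ((univ : Finset (Fin m)).filter
      fun t => t.1 < k ∧ P π hπ t = i).image (pg u π hπ) := by
  intro k
  induction k with
  | zero => intro _ i; simp [stt_zero]
  | succ k ih =>
    intro hk i
    have hkm : k < m := by omega
    have hsets : ((univ : Finset (Fin m)).filter fun t => t.1 < k + 1 ∧ P π hπ t = i)
        = (if P π hπ ⟨k, hkm⟩ = i then {(⟨k, hkm⟩ : Fin m)} else ∅)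
          ∪ ((univ : Finset (Fin m)).filter fun t => t.1 < k ∧ P π hπ t = i) := by
      ext t
      by_cases hPk : P π hπ ⟨k, hkm⟩ = i
      · simp only [hPk, if_pos, mem_union, mem_filter, mem_univ, true_and, mem_singleton]
        constructor
        · rintro ⟨ht, hPt⟩
          rcases Nat.lt_succ_iff_lt_or_eq.mp ht with h | h
          · exact Or.inr ⟨h, hPt⟩
          · exact Or.inl (Fin.ext h)
        · rintro (rfl | ⟨h, hPt⟩)
          · exact ⟨by simp, hPk⟩
          · exact ⟨by omega, hPt⟩
      · simp only [hPk, if_neg, not_false_iff, empty_union, mem_filter, mem_univ, true_and]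
        constructor
        · rintro ⟨ht, hPt⟩
          rcases Nat.lt_succ_iff_lt_or_eq.mp ht with h | h
          · exact ⟨h, hPt⟩
          · exact absurd hPt (by rw [show t = ⟨k, hkm⟩ from Fin.ext h]; exact hPk)
        · rintro ⟨h, hPt⟩; exact ⟨by omega, hPt⟩
    rw [stt_succ u π hπ ⟨k, hkm⟩, hsets]
    simp only [Finset.image_union]
    by_cases hPk : P π hπ ⟨k, hkm⟩ = i
    · rw [if_pos hPk, hPk, Function.update_self, ih (by omega) i]
      simp [Finset.insert_eq, -Finset.singleton_union]
    · rw [if_neg hPk, Function.update_of_ne (by exact fun h => hPk h.symm), ih (by omega) i]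
      simp

lemma count_take : ∀ k, k ≤ m → ∀ i : Fin n, (π.take k).count i
    = (((univ : Finset (Fin m)).filter fun t => t.1 < k ∧ P π hπ t = i)).card := by
  intro k
  induction k with
  | zero => intro _ i; simp
  | succ k ih =>
    intro hk i
    have hkm : k < m := by omega
    have hkl : k < π.length := by omega
    rw [List.take_succ, List.getElem?_eq_getElem hkl]
    simp only [Option.toList_some, List.count_append]
    have hsets : ((univ : Finset (Fin m)).filter fun t => t.1 < k + 1 ∧ P π hπ t = i)
        = ((univ : Finset (Fin m)).filter fun t => t.1 < k ∧ P π hπ t = i)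
          ∪ (if P π hπ ⟨k, hkm⟩ = i then {(⟨k, hkm⟩ : Fin m)} else ∅) := by
      ext t
      by_cases hPk : P π hπ ⟨k, hkm⟩ = i
      · simp only [hPk, if_pos, mem_union, mem_filter, mem_univ, true_and, mem_singleton]
        constructor
        · rintro ⟨ht, hPt⟩
          rcases Nat.lt_succ_iff_lt_or_eq.mp ht with h | h
          · exact Or.inl ⟨h, hPt⟩
          · exact Or.inr (Fin.ext h)
        · rintro (⟨h, hPt⟩ | rfl)
          · exact ⟨by omega, hPt⟩
          · exact ⟨by simp, hPk⟩
      · simp only [hPk, if_neg, not_false_iff, union_empty, mem_filter, mem_univ, true_and]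
        constructor
        · rintro ⟨ht, hPt⟩
          rcases Nat.lt_succ_iff_lt_or_eq.mp ht with h | h
          · exact ⟨h, hPt⟩
          · exact absurd hPt (by rw [show t = ⟨k, hkm⟩ from Fin.ext h]; exact hPk)
        · rintro ⟨h, hPt⟩; exact ⟨by omega, hPt⟩
    rw [hsets, Finset.card_union_of_disjoint, ih (by omega) i]
    · congr 1
      have hg : π[k] = P π hπ ⟨k, hkm⟩ := rfl
      rw [hg]
      by_cases hPk : P π hπ ⟨k, hkm⟩ = i
      · rw [if_pos hPk, hPk]; simp
      · rw [if_neg hPk]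
        simp [List.count_cons, Ne.symm hPk, hPk]
    · by_cases hPk : P π hπ ⟨k, hkm⟩ = i
      · rw [if_pos hPk]
        simp only [Finset.disjoint_singleton_right, mem_filter]
        rintro ⟨-, h, -⟩; omega
      · rw [if_neg hPk]; exact Finset.disjoint_empty_right _

include hπ in
lemma card_M (k : ℕ) (hk : k ≤ m) (i : Fin n) :
    ((stt u π k).2 i).card = (π.take k).count i := by
  rw [M_eq_image u π hπ k hk i, count_take π hπ k hk i]
  exact Finset.card_image_of_injective _ (pg_injective u π hπ)

include hπ in
lemma M_disjoint {i j : Fin n} (hij : i ≠ j) :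
    Disjoint ((stt u π m).2 i) ((stt u π m).2 j) := by
  rw [M_eq_image u π hπ m le_rfl i, M_eq_image u π hπ m le_rfl j]
  rw [Finset.disjoint_left]
  rintro x hx hx'
  obtain ⟨t, ht, rfl⟩ := Finset.mem_image.mp hx
  obtain ⟨t', ht', heq⟩ := Finset.mem_image.mp hx'
  obtain rfl := pg_injective u π hπ heq
  exact hij ((mem_filter.mp ht).2.2.symm.trans (mem_filter.mp ht').2.2)

end Sim


lemma orderIso_lt_iff {m b : ℕ} (S : Finset (Fin m)) (hS : S.card = b)
    (t : Fin b) (K : Fin m) :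
    (↑(S.orderIsoOfFin hS t) : Fin m) < K ↔ t.1 < (S.filter (fun x => x < K)).card := by
  set e := S.orderIsoOfFin hS with he
  have hmono : StrictMono (fun t : Fin b => (↑(e t) : Fin m)) := fun a b hab => by
    exact Subtype.coe_lt_coe.mpr (e.lt_iff_lt.mpr hab)
  set T : Finset (Fin b) := univ.filter (fun t : Fin b => (↑(e t) : Fin m) < K) with hT
  have hcard : T.card = (S.filter (fun x => x < K)).card := by
    apply Finset.card_bij (fun t _ => (↑(e t) : Fin m))
    · intro t ht
      rw [mem_filter]
      exact ⟨(e t).2, (mem_filter.mp ht).2⟩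
    · intro t1 h1 t2 h2 heq
      exact e.injective (Subtype.coe_injective heq)
    · intro x hx
      rw [mem_filter] at hx
      refine ⟨e.symm ⟨x, hx.1⟩, ?_, ?_⟩
      · rw [hT, mem_filter]
        refine ⟨mem_univ _, ?_⟩
        rw [OrderIso.apply_symm_apply]
        exact hx.2
      · rw [OrderIso.apply_symm_apply]
  have hlower : ∀ t1 t2 : Fin b, t1 ≤ t2 → t2 ∈ T → t1 ∈ T := by
    intro t1 t2 h12 h2
    rw [hT, mem_filter] at h2 ⊢
    refine ⟨mem_univ _, lt_of_le_of_lt ?_ h2.2⟩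
    exact Subtype.coe_le_coe.mpr (e.le_iff_le.mpr h12)
  constructor
  · intro h
    rw [← hcard]
    have hsub : Finset.Iic t ⊆ T := fun t' ht' =>
      hlower t' t (mem_Iic.mp ht') (mem_filter.mpr ⟨mem_univ _, h⟩)
    have := Finset.card_le_card hsub
    rw [Fin.card_Iic] at this
    omega
  · intro h
    by_contra hcon
    have hsub : T ⊆ Finset.Iio t := by
      intro t' ht'
      rw [mem_Iio]
      by_contra h2
      exact hcon (mem_filter.mp (hlower t t' (not_lt.mp h2) ht')).2
    have := Finset.card_le_card hsub
    rw [Fin.card_Iio, hcard] at this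
    omega

lemma sum_orderIso {m bb : ℕ} (S : Finset (Fin m)) (hS : S.card = bb) (F : Fin m → ℝ) :
    ∑ t ∈ S, F t = ∑ s : Fin bb, F ↑(S.orderIsoOfFin hS s) := by
  rw [← Finset.sum_coe_sort S F]
  exact (Equiv.sum_comp (S.orderIsoOfFin hS).toEquiv (fun t => F ↑t)).symm

theorem backward (f : ℕ → ℝ) (hf : IsDivisorFn f)
    (h1 : ∀ a b : ℕ, 1 ≤ b → b ≤ a → f a / f b ≤ (a : ℝ) / b)
    (h2 : ∀ a b : ℕ, a ≤ b → b ≠ 0 → f a / f b ≤ ((a : ℝ) + 1) / ((b : ℝ) + 1))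
    (n m : ℕ) (w : Fin n → ℝ) (hw : ∀ i, 0 < w i)
    (π : List (Fin n)) (hπ : π.length = m) (hseq : IsDivisorSeq f w π)
    (u : Fin n → Fin m → ℝ) (hu : ∀ i j, 0 ≤ u i j) :
    isWWEF1 w u (allocate u π) := by
  obtain ⟨hmono, hbnd⟩ := hf
  intro i j
  rw [Sim.allocate_eq u π hπ]
  set M : Fin n → Finset (Fin m) := (Sim.stt u π m).2 with hM
  by_cases hij : i = j
  · subst hij
    exact ⟨∅, empty_subset _, by simp, Or.inl (le_of_eq (by rw [Finset.sdiff_empty]))⟩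
  have hfil : ∀ (i' : Fin n), ((univ : Finset (Fin m)).filter
      fun t => t.1 < m ∧ Sim.P π hπ t = i')
      = (univ : Finset (Fin m)).filter (fun t => Sim.P π hπ t = i') := by
    intro i'; ext t
    simp only [mem_filter, mem_univ, true_and]
    exact ⟨fun h => h.2, fun h => ⟨t.2, h⟩⟩
  set Sj := (univ : Finset (Fin m)).filter (fun t => Sim.P π hπ t = j) with hSj
  set Si := (univ : Finset (Fin m)).filter (fun t => Sim.P π hπ t = i) with hSi
  set b := Sj.card with hb
  set a := Si.card with ha
  set e := Sj.orderIsoOfFin rfl with he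
  set ei := Si.orderIsoOfFin rfl with hei
  have hMj_eq : M j = Sj.image (Sim.pg u π hπ) := by
    rw [hM, Sim.M_eq_image u π hπ m le_rfl j, hfil j]
  have hMi_eq : M i = Si.image (Sim.pg u π hπ) := by
    rw [hM, Sim.M_eq_image u π hπ m le_rfl i, hfil i]
  have hcountAt : ∀ (i' : Fin n) (K : Fin m), (π.take K.1).count i'
      = (((univ : Finset (Fin m)).filter (fun t => Sim.P π hπ t = i')).filter
          (fun x => x < K)).card := by
    intro i' K
    rw [Sim.count_take π hπ K.1 K.2.le i', Finset.filter_filter]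
    congr 1
    ext t
    simp only [mem_filter, mem_univ, true_and]
    exact ⟨fun h => ⟨h.2, h.1⟩, fun h => ⟨h.2, h.1⟩⟩
  -- the x, y, c sequences
  set x : ℕ → ℝ := fun t => if h : t < a then u i (Sim.pg u π hπ ↑(ei ⟨t, h⟩)) else 0
    with hx
  set y : ℕ → ℝ := fun s => if h : s < b then u i (Sim.pg u π hπ ↑(e ⟨s, h⟩)) else 0
    with hy
  set c : ℕ → ℕ := fun s => if h : s < b then (Si.filter (fun t => t < ↑(e ⟨s, h⟩))).card
    else a with hc
  have hx0 : ∀ t, 0 ≤ x t := by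
    intro t; rw [hx]; dsimp only; split
    · exact hu i _
    · exact le_refl 0
  have hy0 : ∀ s, 0 ≤ y s := by
    intro s; rw [hy]; dsimp only; split
    · exact hu i _
    · exact le_refl 0
  have hxmono : ∀ t t', t ≤ t' → x t' ≤ x t := by
    intro t t' htt
    by_cases h' : t' < a
    · have ht : t < a := lt_of_le_of_lt htt h'
      rw [hx]; dsimp only
      rw [dif_pos h', dif_pos ht]
      rcases eq_or_lt_of_le htt with rfl | hlt
      · exact le_refl _
      · have hklt : (↑(ei ⟨t, ht⟩) : Fin m) < ↑(ei ⟨t', h'⟩) :=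
          Subtype.coe_lt_coe.mpr (ei.lt_iff_lt.mpr hlt)
        have hPi : Sim.P π hπ ↑(ei ⟨t, ht⟩) = i := (mem_filter.mp (ei ⟨t, ht⟩).2).2
        have := Sim.pg_lt_val u π hπ hklt
        rwa [hPi] at this
    · rw [hx]; dsimp only
      rw [dif_neg h']
      exact hx0 t
  have hc_le : ∀ s, c s ≤ a := by
    intro s; rw [hc]; dsimp only; split
    · exact card_le_card (filter_subset _ _)
    · exact le_refl a
  have hc_mono : ∀ s s', s ≤ s' → s' < b → c s ≤ c s' := by
    intro s s' hss hs'
    have hs : s < b := lt_of_le_of_lt hss hs'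
    rw [hc]; dsimp only
    rw [dif_pos hs, dif_pos hs']
    apply card_le_card
    intro t ht
    rw [mem_filter] at ht ⊢
    refine ⟨ht.1, lt_of_lt_of_le ht.2 ?_⟩
    exact Subtype.coe_le_coe.mpr (e.le_iff_le.mpr (by exact_mod_cast hss))
  have hy_le_x : ∀ s (hs : s < b), 1 ≤ c s → y s ≤ x (c s - 1) := by
    intro s hs hcs
    have hca : c s ≤ a := hc_le s
    have hcs_eq : c s = (Si.filter (fun t => t < ↑(e ⟨s, hs⟩))).card := by
      rw [hc]; dsimp only; rw [dif_pos hs]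
    have ht0 : c s - 1 < a := by omega
    have hlt : (↑(ei ⟨c s - 1, ht0⟩) : Fin m) < ↑(e ⟨s, hs⟩) := by
      rw [orderIso_lt_iff Si rfl ⟨c s - 1, ht0⟩ ↑(e ⟨s, hs⟩)]
      dsimp only
      omega
    have hPi : Sim.P π hπ ↑(ei ⟨c s - 1, ht0⟩) = i := (mem_filter.mp (ei ⟨c s - 1, ht0⟩).2).2
    have hval := Sim.pg_lt_val u π hπ hlt
    rw [hPi] at hval
    rw [hy, hx]; dsimp only
    rw [dif_pos hs, dif_pos ht0]
    exact hval
  have hall_raw : ∀ s (hs : s < b), w i * f s ≤ w j * f (c s) := by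
    intro s hs
    set K : Fin m := ↑(e ⟨s, hs⟩) with hK
    have hk : (K : Fin m).1 < π.length := by rw [hπ]; exact K.2
    have spec := (hseq K.1 hk i).1
    have hget : π.get ⟨K.1, hk⟩ = Sim.P π hπ K := rfl
    have hPj : Sim.P π hπ K = j := (mem_filter.mp (e ⟨s, hs⟩).2).2
    have hcntj : (π.take K.1).count j = s := by
      rw [hcountAt j K, ← hSj]
      have hiff : ∀ t : Fin b, (↑(e t) : Fin m) < K ↔ t.1 < (Sj.filter (fun x => x < K)).card :=
        fun t => orderIso_lt_iff Sj rfl t K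
      have hcb : (Sj.filter (fun x => x < K)).card ≤ b :=
        card_le_card (filter_subset _ _)
      by_contra hne
      rcases Nat.lt_or_ge (Sj.filter (fun x => x < K)).card s with hlt | hge
      · have h1 := (hiff ⟨(Sj.filter (fun x => x < K)).card, by omega⟩).not.mpr (by simp)
        apply h1
        exact Subtype.coe_lt_coe.mpr (e.lt_iff_lt.mpr (by exact_mod_cast hlt))
      · have hgt : s < (Sj.filter (fun x => x < K)).card := by omega
        have h2 := (hiff ⟨s, hs⟩).mpr hgt
        exact absurd h2 (lt_irrefl K)
    have hcnti : (π.take K.1).count i = c s := by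
      rw [hcountAt i K, ← hSi, hc]; dsimp only; rw [dif_pos hs]
    rw [hget, hPj, hcntj, hcnti] at spec
    rw [div_le_div_iff₀ (hw j) (hw i)] at spec
    nlinarith [spec]
  -- sums
  have hsum_Mj : ∑ x_ ∈ M j, u i x_ = ∑ s ∈ range b, y s := by
    rw [hMj_eq, Finset.sum_image (fun t1 _ t2 _ h => Sim.pg_injective u π hπ h),
      sum_orderIso Sj rfl (fun t => u i (Sim.pg u π hπ t)),
      ← Fin.sum_univ_eq_sum_range]
    apply Finset.sum_congr rfl
    intro s _
    rw [hy]; dsimp only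
    rw [dif_pos s.2]
  have hsum_Mi : ∑ x_ ∈ M i, u i x_ = ∑ t ∈ range a, x t := by
    rw [hMi_eq, Finset.sum_image (fun t1 _ t2 _ h => Sim.pg_injective u π hπ h),
      sum_orderIso Si rfl (fun t => u i (Sim.pg u π hπ t)),
      ← Fin.sum_univ_eq_sum_range]
    apply Finset.sum_congr rfl
    intro t _
    rw [hx]; dsimp only
    rw [dif_pos t.2]
  set X : ℝ := ∑ t ∈ range a, x t with hX
  set T : ℝ := ∑ s ∈ range b, y s with hT
  have hX0 : 0 ≤ X := sum_nonneg fun t _ => hx0 t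
  -- case b = 0
  rcases Nat.eq_zero_or_pos b with hb0 | hbpos
  · have hSj_empty : Sj = ∅ := Finset.card_eq_zero.mp (by rw [← hb]; exact hb0)
    have hMj_empty : M j = ∅ := by rw [hMj_eq, hSj_empty]; simp
    refine ⟨∅, empty_subset _, by simp, Or.inl ?_⟩
    rw [hMj_empty]
    simp only [Finset.empty_sdiff, Finset.sum_empty, zero_div]
    exact div_nonneg (by rw [hsum_Mi]; exact hX0) (hw i).le
  -- b ≥ 1: the best item of M j
  have hMj_ne : (M j).Nonempty := by
    rw [hMj_eq]
    exact ⟨Sim.pg u π hπ ↑(e ⟨0, hbpos⟩), Finset.mem_image_of_mem _ (e ⟨0, hbpos⟩).2⟩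
  obtain ⟨gs, hgs_mem, hgs_max⟩ := Finset.exists_max_image (M j) (u i) hMj_ne
  set ystar : ℝ := u i gs with hystar
  have hystar0 : 0 ≤ ystar := hu i gs
  have hy_star : ∀ s, s < b → y s ≤ ystar := by
    intro s hs
    rw [hy]; dsimp only; rw [dif_pos hs]
    apply hgs_max
    rw [hMj_eq]
    exact Finset.mem_image_of_mem _ (e ⟨s, hs⟩).2
  have hgs_not_Mi : gs ∉ M i := by
    intro hmem
    exact (Finset.disjoint_left.mp (Sim.M_disjoint u π hπ hij) hmem) hgs_mem
  refine ⟨{gs}, Finset.singleton_subset_iff.mpr hgs_mem, by simp, ?_⟩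
  rcases le_or_gt (w i) (w j) with hwij | hwij
  · -- light agent: add one item
    right
    set z : ℕ → ℝ := fun t => if t = 0 then ystar else min ystar (x (t-1)) with hz
    have hz0 : ∀ t, 0 ≤ z t := by
      intro t; rw [hz]; dsimp only; split
      · exact hystar0
      · exact le_min hystar0 (hx0 _)
    have hzval : ∀ t, 0 < t → z t = min ystar (x (t-1)) := by
      intro t ht
      rw [hz]; dsimp only; rw [if_neg (by omega)]
    have hz00 : z 0 = ystar := by simp [hz]
    have hza : ∀ t t', t ≤ t' → z t' ≤ z t := by
      intro t t' htt
      rcases Nat.eq_zero_or_pos t with rfl | ht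
      · rw [hz00]
        rcases Nat.eq_zero_or_pos t' with rfl | ht'
        · rw [hz00]
        · rw [hzval t' ht']
          exact min_le_left _ _
      · rw [hzval t ht, hzval t' (by omega)]
        exact le_min (min_le_left _ _)
          (le_trans (min_le_right _ _) (hxmono (t-1) (t'-1) (by omega)))
    have hy_z : ∀ s, s < b → y s ≤ z (c s) := by
      intro s hs
      rcases Nat.eq_zero_or_pos (c s) with hcs | hcs
      · rw [hcs, hz00]; exact hy_star s hs
      · rw [hzval _ hcs]
        exact le_min (hy_star s hs) (hy_le_x s hs hcs)
    have hhall : ∀ s, s < b → w i * ((s : ℝ) + 1) ≤ w j * ((c s : ℝ) + 1) := by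
      intro s hs
      exact hall_le hmono hbnd h1 h2 (hw i) (hw j) hwij s (c s) (hall_raw s hs)
    have hch := charge (w i) (w j) (hw i) (hw j) z hz0 hza y c b hy_z hc_mono hhall
      (a + 1) (fun s hs => by have := hc_le s; omega)
    have hz_sum : ∑ t ∈ range (a+1), z t ≤ ystar + X := by
      rw [Finset.sum_range_succ']
      have hle : ∀ t ∈ range a, z (t+1) ≤ x t := by
        intro t _
        rw [hzval (t+1) (by omega)]
        simpa using min_le_right ystar (x t)
      have hzsum := Finset.sum_le_sum hle
      rw [hz00, hX]
      linarith
    have hMiB : M i ∪ {gs} = insert gs (M i) := by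
      rw [Finset.union_comm, ← Finset.insert_eq]
    rw [hsum_Mj, hMiB, Finset.sum_insert hgs_not_Mi]
    rw [div_le_div_iff₀ (hw j) (hw i)]
    have hfin : w i * T ≤ w j * (ystar + X) :=
      le_trans hch (mul_le_mul_of_nonneg_left hz_sum (hw j).le)
    calc T * w i = w i * T := mul_comm _ _
      _ ≤ w j * (ystar + X) := hfin
      _ = (u i gs + ∑ x_ ∈ M i, u i x_) * w j := by
          rw [hsum_Mi, ← hystar]; ring
  · -- heavy agent: remove one item
    left
    have key : w i * (T - ystar) ≤ w j * X := by
      rcases Nat.lt_or_ge b 2 with hb1 | hb2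
      · -- b = 1
        have hb1' : b = 1 := by omega
        have hTy : T = y 0 := by rw [hT, hb1', sum_range_one]
        have : T - ystar ≤ 0 := by
          rw [hTy]
          have := hy_star 0 (by omega)
          linarith
        nlinarith [mul_nonneg (hw j).le hX0, (hw i)]
      · -- b ≥ 2
        have hcpos : ∀ s, s + 1 < b → 1 ≤ c (s+1) ∧
            w i * ((s+1 : ℕ) : ℝ) ≤ w j * ((c (s+1) : ℕ) : ℝ) := by
          intro s hs
          exact hall_ge hmono hbnd h1 h2 (hw i) (hw j) hwij.le (s+1) (c (s+1))
            (by omega) (hall_raw (s+1) hs)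
        have ha1 : 1 ≤ a := by
          have h01 : 1 ≤ c 1 := (hcpos 0 (by omega)).1
          have h02 := hc_le 1
          omega
        set y' : ℕ → ℝ := fun s => y (s+1) with hy'
        set c' : ℕ → ℕ := fun s => c (s+1) - 1 with hc'
        have hch := charge (w i) (w j) (hw i) (hw j) x hx0 hxmono y' c' (b-1)
          (fun s hs => by
            rw [hy', hc']; dsimp only
            have h1c := (hcpos s (by omega)).1
            exact hy_le_x (s+1) (by omega) h1c)
          (fun s s' hss hs' => by
            rw [hc']; dsimp only
            have := hc_mono (s+1) (s'+1) (by omega) (by omega)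
            omega)
          (fun s hs => by
            rw [hc']; dsimp only
            obtain ⟨h1c, h2c⟩ := hcpos s (by omega)
            have hcast : ((c (s+1) - 1 : ℕ) : ℝ) + 1 = ((c (s+1) : ℕ) : ℝ) := by
              rw [Nat.cast_sub h1c]; push_cast; ring
            rw [hcast]
            push_cast at h2c ⊢
            linarith)
          a (fun s hs => by
            rw [hc']; dsimp only
            have := hc_le (s+1)
            have := (hcpos s (by omega)).1
            omega)
        have hsplit : T = (∑ s ∈ range (b-1), y (s+1)) + y 0 := by
          rw [hT]
          have hbb : b = (b-1) + 1 := by omega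
          rw [hbb, Finset.sum_range_succ']
          rfl
        have hy0star := hy_star 0 (by omega)
        have hch' : w i * (∑ s ∈ range (b-1), y (s+1)) ≤ w j * X := by
          rw [hX]; exact hch
        have hmono' : w i * (T - ystar) ≤ w i * (∑ s ∈ range (b-1), y (s+1)) := by
          apply mul_le_mul_of_nonneg_left _ (hw i).le
          rw [hsplit]; linarith
        linarith
    rw [Finset.sum_sdiff_eq_sub (Finset.singleton_subset_iff.mpr hgs_mem),
      Finset.sum_singleton, hsum_Mj, hsum_Mi, ← hystar]
    rw [div_le_div_iff₀ (hw j) (hw i)]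
    nlinarith [key]


lemma card_allocate {n m : ℕ} (u : Fin n → Fin m → ℝ) (π : List (Fin n))
    (hπ : π.length = m) (i : Fin n) : ((allocate u π) i).card = π.count i := by
  rw [Sim.allocate_eq u π hπ, Sim.card_M u π hπ m le_rfl i,
    List.take_of_length_le (le_of_eq hπ)]

namespace Greedy
variable {n : ℕ} [NeZero n] (f : ℕ → ℝ) (w : Fin n → ℝ)

/-- candidates minimizing the divisor key -/
noncomputable def cands (cnt : Fin n → ℕ) : Finset (Fin n) :=
  univ.filter fun i => ∀ i' : Fin n, f (cnt i) / w i ≤ f (cnt i') / w i'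

lemma cands_nonempty (cnt : Fin n → ℕ) : (cands f w cnt).Nonempty := by
  obtain ⟨i0, -, hmin⟩ := Finset.exists_min_image univ (fun i => f (cnt i) / w i)
    ⟨Classical.arbitrary (Fin n), mem_univ _⟩
  exact ⟨i0, mem_filter.mpr ⟨mem_univ _, fun i' => hmin i' (mem_univ _)⟩⟩

noncomputable def gstep (cnt : Fin n → ℕ) : Fin n :=
  (cands f w cnt).min' (cands_nonempty f w cnt)

lemma gstep_min (cnt : Fin n → ℕ) (i : Fin n) :
    f (cnt (gstep f w cnt)) / w (gstep f w cnt) ≤ f (cnt i) / w i := by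
  have := Finset.min'_mem (cands f w cnt) (cands_nonempty f w cnt)
  exact (mem_filter.mp this).2 i

lemma gstep_strict (cnt : Fin n → ℕ) (i : Fin n) (hi : i < gstep f w cnt) :
    f (cnt (gstep f w cnt)) / w (gstep f w cnt) < f (cnt i) / w i := by
  rcases lt_or_eq_of_le (gstep_min f w cnt i) with h | h
  · exact h
  · exfalso
    have hic : i ∈ cands f w cnt := by
      rw [cands, mem_filter]
      exact ⟨mem_univ _, fun i' => by rw [← h]; exact gstep_min f w cnt i'⟩
    exact absurd (Finset.min'_le _ _ hic) (not_le.mpr hi)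

noncomputable def gseq : ℕ → List (Fin n)
  | 0 => []
  | k+1 => gseq k ++ [gstep f w (fun i => (gseq k).count i)]

lemma gseq_length (k : ℕ) : (gseq f w k).length = k := by
  induction k with
  | zero => rfl
  | succ k ih => rw [gseq]; simp [ih]

lemma gseq_take {k K : ℕ} (h : k ≤ K) : (gseq f w K).take k = gseq f w k := by
  induction K with
  | zero =>
    have hk0 : k = 0 := by omega
    subst hk0; rfl
  | succ K ih =>
    rcases Nat.eq_or_lt_of_le h with rfl | h'
    · exact List.take_of_length_le (le_of_eq (gseq_length f w _))
    · rw [gseq, List.take_append_of_le_length (by rw [gseq_length]; omega)]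
      exact ih (by omega)

lemma gseq_get {k K : ℕ} (hk : k < K) (hk' : k < (gseq f w K).length) :
    (gseq f w K).get ⟨k, hk'⟩ = gstep f w (fun i => (gseq f w k).count i) := by
  induction K with
  | zero => omega
  | succ K ih =>
    rcases Nat.eq_or_lt_of_le (Nat.lt_succ_iff.mp hk) with rfl | h'
    · simp only [gseq, List.get_eq_getElem]
      rw [List.getElem_append_right (by simp [gseq_length])]
      simp [gseq_length]
    · simp only [gseq, List.get_eq_getElem]
      rw [List.getElem_append_left (by rw [gseq_length]; omega)]
      exact ih h' (by rw [gseq_length]; omega)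

lemma gseq_isDivisorSeq (m : ℕ) : IsDivisorSeq f w (gseq f w m) := by
  intro k hk i
  have hkm : k < m := by rw [gseq_length] at hk; exact hk
  rw [gseq_get f w hkm hk, gseq_take f w hkm.le]
  exact ⟨gstep_min f w (fun i' => (gseq f w k).count i') i,
    gstep_strict f w (fun i' => (gseq f w k).count i') i⟩

end Greedy

-- counterexample count dynamics for n = 2
namespace CE
variable (f : ℕ → ℝ) (hmono : StrictMono f) (A B : ℕ) (hfA : 0 < f A) (hfB : 0 < f B)

noncomputable abbrev wt : Fin 2 → ℝ := ![f B, f A]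

include hmono hfA hfB in
lemma counts : ∀ k, k ≤ A + B + 1 →
    (Greedy.gseq f (wt f A B) k).count 1 ≤ A ∧
    (Greedy.gseq f (wt f A B) k).count 0 + (Greedy.gseq f (wt f A B) k).count 1 = k ∧
    ((Greedy.gseq f (wt f A B) k).count 0 ≤ B ∨
      ((Greedy.gseq f (wt f A B) k).count 0 = B + 1 ∧
       (Greedy.gseq f (wt f A B) k).count 1 = A)) := by
  set w : Fin 2 → ℝ := wt f A B with hw
  have hw0 : w 0 = f B := rfl
  have hw1 : w 1 = f A := rfl
  intro k
  induction k with
  | zero => intro _; simp [Greedy.gseq]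
  | succ k ih =>
    intro hk1
    obtain ⟨ih1, ih2, ih3⟩ := ih (by omega)
    set cnt : Fin 2 → ℕ := fun i => (Greedy.gseq f w k).count i with hcnt
    set g : Fin 2 := Greedy.gstep f w cnt with hg
    have hcc0 : cnt 0 = (Greedy.gseq f w k).count 0 := rfl
    have hcc1 : cnt 1 = (Greedy.gseq f w k).count 1 := rfl
    have hcount : ∀ i : Fin 2, (Greedy.gseq f w (k+1)).count i
        = cnt i + if g = i then 1 else 0 := by
      intro i
      rw [Greedy.gseq, List.count_append]
      by_cases h : g = i
      · subst h; simp [hg, hcnt]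
      · rw [if_neg h]
        have : List.count i [g] = 0 := by
          rw [List.count_eq_zero]
          simp [Ne.symm h]
        rw [this]
    -- the two exclusion rules
    have hrule1 : cnt 1 = A → cnt 0 ≤ B → g = 0 := by
      intro hA hB
      have hmin := Greedy.gstep_min f w cnt 0
      rw [← hg] at hmin
      -- g is 0 or 1
      have : g = 0 ∨ g = 1 := by omega
      rcases this with h | h
      · exact h
      · exfalso
        rw [h, hA, hw1, hw0] at hmin
        -- f A / f A ≤ f (cnt 0) / f B  →  f B ≤ f (cnt 0) → B ≤ cnt 0 → cnt 0 = B
        have h1 : (1:ℝ) ≤ f (cnt 0) / f B := by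
          rw [div_self (ne_of_gt hfA)] at hmin; exact hmin
        have h2 : f B ≤ f (cnt 0) := by
          rw [le_div_iff₀ hfB] at h1; linarith
        have h3 : B ≤ cnt 0 := by
          by_contra hcon
          exact absurd h2 (not_le.mpr (hmono (by omega)))
        have hB0 : cnt 0 = B := by omega
        -- then 0 is also a candidate, min' should pick 0
        have h0c : (0 : Fin 2) ∈ Greedy.cands f w cnt := by
          rw [Greedy.cands, mem_filter]
          refine ⟨mem_univ _, fun i' => ?_⟩
          have : f (cnt 0) / w 0 = f (cnt (1 : Fin 2)) / w 1 := by
            rw [hB0, hA, hw0, hw1, div_self (ne_of_gt hfB), div_self (ne_of_gt hfA)]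
          fin_cases i' <;> simp only []
          · exact le_refl _
          · rw [this]
            have := Greedy.gstep_min f w cnt 1
            rw [← hg, h] at this
            exact this
        have := Finset.min'_le _ _ h0c
        rw [← Greedy.gstep, ← hg, h] at this
        exact absurd this (by norm_num)
    have hrule2 : cnt 0 = B → cnt 1 < A → g = 1 := by
      intro hB hA
      have : g = 0 ∨ g = 1 := by omega
      rcases this with h | h
      · exfalso
        have hmin := Greedy.gstep_min f w cnt 1
        rw [← hg, h, hB, hw0, hw1] at hmin
        have h1 : (1:ℝ) ≤ f (cnt 1) / f A := by
          rw [div_self (ne_of_gt hfB)] at hmin; exact hmin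
        have h2 : f A ≤ f (cnt 1) := by
          rw [le_div_iff₀ hfA] at h1; linarith
        exact absurd h2 (not_le.mpr (hmono hA))
      · exact h
    -- case analysis
    rcases ih3 with hged | ⟨hB1, hA1⟩
    · -- cnt 0 ≤ B
      rcases Nat.lt_or_ge (cnt 1) A with hlt | hge
      · -- cnt 1 < A : anything can happen
        by_cases hB : cnt 0 = B
        · have hg1 := hrule2 hB hlt
          refine ⟨?_, ?_, ?_⟩
          · rw [hcount 1, hg1]; simp; omega
          · rw [hcount 0, hcount 1, hg1]; simp; omega
          · left; rw [hcount 0, hg1]; simp; omega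
        · refine ⟨?_, ?_, ?_⟩
          · rw [hcount 1]; split <;> omega
          · rw [hcount 0, hcount 1]
            rcases (by omega : g = 0 ∨ g = 1) with h | h <;> rw [h] <;> simp <;> omega
          · left; rw [hcount 0]; split <;> omega
      · -- cnt 1 = A
        have hA1 : cnt 1 = A := by omega
        have hg0 := hrule1 hA1 hged
        refine ⟨?_, ?_, ?_⟩
        · rw [hcount 1, hg0]; simp; omega
        · rw [hcount 0, hcount 1, hg0]; simp; omega
        · rw [hcount 0, hcount 1, hg0]
          simp
          omega
    · -- cnt 0 = B + 1 and cnt 1 = A : k = A + B + 1, contradiction with k < A+B+1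
      omega

end CE

lemma forward_violation (f : ℕ → ℝ) (hf : IsDivisorFn f) (A B : ℕ) (hB : 1 ≤ B)
    (hfA : 0 < f A) (hfB : 0 < f B)
    (hv1 : f B * A < f A * B) (hv2 : f B * (A+1) < f A * (B+1))
    (hLHS : ∀ (n m : ℕ) (w : Fin n → ℝ), (∀ i, 0 < w i) →
      ∀ π : List (Fin n), π.length = m → IsDivisorSeq f w π →
      ∀ u : Fin n → Fin m → ℝ, (∀ i j, 0 ≤ u i j) →
        isWWEF1 w u (allocate u π)) : False := by
  obtain ⟨hmono, hbnd⟩ := hf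
  set m : ℕ := A + B + 1 with hm
  set w : Fin 2 → ℝ := CE.wt f A B with hw
  have hw0 : w 0 = f B := rfl
  have hw1 : w 1 = f A := rfl
  have hwpos : ∀ i : Fin 2, 0 < w i := by
    intro i
    fin_cases i
    · exact hfB
    · exact hfA
  set π : List (Fin 2) := Greedy.gseq f w m with hπ
  have hlen : π.length = m := Greedy.gseq_length f w m
  set u : Fin 2 → Fin m → ℝ := fun _ _ => (1:ℝ) with hu
  have hW := hLHS 2 m w hwpos π hlen (Greedy.gseq_isDivisorSeq f w m) u (fun _ _ => zero_le_one)
  -- counts at the end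
  obtain ⟨hc1, hc2, hc3⟩ := CE.counts f hmono A B hfA hfB m le_rfl
  rw [← hw] at hc1 hc2 hc3
  rw [← hπ] at hc1 hc2 hc3
  have hcnt1 : π.count 1 = A := by
    rcases hc3 with h | h
    · omega
    · exact h.2
  have hcnt0 : π.count 0 = B + 1 := by omega
  -- allocation cards
  have hM0 : ((allocate u π) 0).card = B + 1 := by
    rw [card_allocate u π hlen 0]; exact hcnt0
  have hM1 : ((allocate u π) 1).card = A := by
    rw [card_allocate u π hlen 1]; exact hcnt1
  -- the WWEF1 guarantee for (1, 0) fails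
  obtain ⟨Bs, hBs, hBcard, hdisj⟩ := hW 1 0
  have hsum : ∀ S : Finset (Fin m), ∑ x ∈ S, u 1 x = (S.card : ℝ) := by
    intro S; rw [hu]; simp
  have hAcast : (0:ℝ) ≤ (A:ℝ) := by positivity
  rcases hdisj with h | h
  · rw [hsum, hsum, hw0, hw1, hM1] at h
    have hcard_sdiff : B ≤ (((allocate u π) 0) \ Bs).card := by
      rw [Finset.card_sdiff_of_subset hBs, hM0]; omega
    have hstep : (B : ℝ) / f B ≤ (A : ℝ) / f A := by
      refine le_trans ?_ h
      exact (div_le_div_iff_of_pos_right hfB).mpr (by exact_mod_cast hcard_sdiff)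
    rw [div_le_div_iff₀ hfB hfA] at hstep
    linarith
  · rw [hsum, hsum, hw0, hw1, hM0] at h
    have hcard_union : (((allocate u π) 1) ∪ Bs).card ≤ A + 1 := by
      calc (((allocate u π) 1) ∪ Bs).card ≤ ((allocate u π) 1).card + Bs.card :=
            Finset.card_union_le _ _
        _ ≤ A + 1 := by rw [hM1]; omega
    push_cast at h
    have hstep : ((B:ℝ) + 1) / f B ≤ ((A:ℝ) + 1) / f A := by
      refine le_trans h ?_
      exact (div_le_div_iff_of_pos_right hfA).mpr (by exact_mod_cast hcard_union)
    rw [div_le_div_iff₀ hfB hfA] at hstep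
    push_cast at hstep
    linarith

/-- A divisor method with function `f` satisfies WWEF1 (produces a
WWEF1 allocation for every instance) if and only if (1) `f a / f b ≤ a / b` for all
integers `1 ≤ b ≤ a`, and (2) `f a / f b ≤ (a + 1) / (b + 1)` for all integers
`0 ≤ a ≤ b` with `b ≠ 0`. -/
theorem divisor_WWEF1_characterization (f : ℕ → ℝ) (hf : IsDivisorFn f) :
    (∀ (n m : ℕ) (w : Fin n → ℝ), (∀ i, 0 < w i) →
      ∀ π : List (Fin n), π.length = m → IsDivisorSeq f w π →
      ∀ u : Fin n → Fin m → ℝ, (∀ i j, 0 ≤ u i j) →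
        isWWEF1 w u (allocate u π)) ↔
      ((∀ a b : ℕ, 1 ≤ b → b ≤ a → f a / f b ≤ (a : ℝ) / b) ∧
       (∀ a b : ℕ, a ≤ b → b ≠ 0 → f a / f b ≤ ((a : ℝ) + 1) / ((b : ℝ) + 1))) := by
  obtain ⟨hmono, hbnd⟩ := hf
  constructor
  · intro hLHS
    have hfpos : ∀ t : ℕ, 1 ≤ t → 0 < f t := by
      intro t ht
      have h1 := (hbnd t).1
      have h2 : (1:ℝ) ≤ (t:ℝ) := by exact_mod_cast ht
      linarith
    constructor
    · intro a b hb hba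
      by_contra hcon
      push_neg at hcon
      have hfb : 0 < f b := hfpos b hb
      have hfa : 0 < f a := hfpos a (by omega)
      have hbpos : (0:ℝ) < (b:ℝ) := by exact_mod_cast hb
      rw [div_lt_div_iff₀ hbpos hfb] at hcon
      have hfab : f b ≤ f a := hmono.monotone hba
      refine forward_violation f ⟨hmono, hbnd⟩ a b hb hfa hfb (by push_cast; linarith)
        (by push_cast; linarith) hLHS
    · intro a b hab hb
      by_contra hcon
      push_neg at hcon
      have hfb : 0 < f b := hfpos b (by omega)
      have hb1pos : (0:ℝ) < (b:ℝ)+1 := by positivity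
      rw [div_lt_div_iff₀ hb1pos hfb] at hcon
      -- hcon : (a+1) * f b < f a * (b+1)
      have hfa : 0 < f a := by
        have h0 : (0:ℝ) < ((a:ℝ)+1) * f b := by positivity
        nlinarith
      have hfab : f a ≤ f b := hmono.monotone hab
      refine forward_violation f ⟨hmono, hbnd⟩ a b (by omega) hfa hfb (by push_cast; linarith)
        (by push_cast; linarith) hLHS
  · rintro ⟨h1, h2⟩
    intro n m w hw π hπ hseq u hu
    exact backward f ⟨hmono, hbnd⟩ h1 h2 n m w hw π hπ hseq u hu
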